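/- Let d ≥ 2, let {𝒫^(b)}_{b=1}^{d+1} be a set of d+1 mutually unbiased measurements on ℂ^d with efficiency parameter κ, and let ρ be a density operator on ℂ^d. Then the index of coincidence of the probability distributions generated by the MUMs on ρ satisfies C(κ,ρ) = [(dκ−1)(d·Tr(ρ²)−1) + d²−1] / (d(d−1)). -/

import Mathlib

set_option maxHeartbeats 1000000


open Matrix Finset Real
open scoped ComplexOrder

theorem stmt0 (d : ℕ) (hd : 2 ≤ d) (κ : ℝ)
    (hκ1 : 1 / (d : ℝ) < κ) (hκ2 : κ ≤ 1)
    (P : Fin (d + 1) → Fin d → Matrix (Fin d) (Fin d) ℂ)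
    (hpsd : ∀ b n, (P b n).PosSemidef)
    (hsum : ∀ b, ∑ n, P b n = 1)
    (htr1 : ∀ b n, (P b n).trace = 1)
    (htr2 : ∀ b b', b ≠ b' → ∀ n n', (P b n * P b' n').trace = ((1 / (d : ℝ) : ℝ) : ℂ))
    (htr3 : ∀ b n n', (P b n * P b n').trace =
      if n = n' then ((κ : ℝ) : ℂ) else (((1 - κ) / ((d : ℝ) - 1) : ℝ) : ℂ))
    (ρ : Matrix (Fin d) (Fin d) ℂ) (hρ : ρ.PosSemidef) (hρtr : ρ.trace = 1)
    (p : Fin (d + 1) → Fin d → ℝ)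
    (hp : ∀ b n, ((p b n : ℝ) : ℂ) = (P b n * ρ).trace) :
    ∑ b, ∑ n, (p b n) ^ 2 =
      (((d : ℝ) * κ - 1) * ((d : ℝ) * ((ρ * ρ).trace.re) - 1) + (d : ℝ) ^ 2 - 1) /
        ((d : ℝ) * ((d : ℝ) - 1)) := by
  have hd0 : (d : ℝ) ≠ 0 := by positivity
  have hd2 : (2 : ℝ) ≤ (d : ℝ) := by exact_mod_cast hd
  have hd1 : (d : ℝ) - 1 ≠ 0 := by nlinarith
  have hdc0 : (d : ℂ) ≠ 0 := by exact_mod_cast (Nat.cast_ne_zero (R := ℂ)).2 (by omega)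
  have hdc1 : (d : ℂ) - 1 ≠ 0 := by
    intro h
    have : ((d : ℝ) : ℂ) = ((1 : ℝ) : ℂ) := by push_cast; linear_combination h
    exact hd1 (by have := Complex.ofReal_injective this; linarith)
  set c : ℝ := ((d : ℝ) * κ - 1) / ((d : ℝ) - 1) with hc_def
  have hc0 : c ≠ 0 := by
    have h1 : 1 < (d : ℝ) * κ := by
      rw [div_lt_iff₀ (by linarith)] at hκ1; linarith [hκ1]
    have : 0 < c := div_pos (by linarith) (by linarith)
    linarith
  have hcc0 : ((c : ℂ)) ≠ 0 := by exact_mod_cast Complex.ofReal_ne_zero.2 hc0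
  -- traceless parts
  set v : Fin (d + 1) → Fin d → Matrix (Fin d) (Fin d) ℂ :=
    fun b n => P b n - ((d : ℂ))⁻¹ • 1 with hv_def
  have htrv0 : ∀ b n, (v b n).trace = 0 := by
    intro b n
    simp [hv_def, Matrix.trace_sub, Matrix.trace_smul, Matrix.trace_one, htr1]
    field_simp
    simp
  have hexp : ∀ b n b' n', (v b n * v b' n').trace
      = (P b n * P b' n').trace - ((d : ℂ))⁻¹ := by
    intro b n b' n'
    simp only [hv_def, Matrix.sub_mul, Matrix.mul_sub, Matrix.trace_sub,
      Matrix.smul_mul, Matrix.mul_smul, Matrix.trace_smul, Matrix.trace_one,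
      Matrix.one_mul, Matrix.mul_one, htr1, smul_smul, smul_eq_mul, mul_one]
    field_simp
    simp
  have htrv : ∀ b n b' n', (v b n * v b' n').trace
      = if b = b' then (if n = n' then ((κ - 1/(d:ℝ) : ℝ) : ℂ)
          else ((-c/(d:ℝ) : ℝ) : ℂ)) else 0 := by
    intro b n b' n'
    rw [hexp]
    by_cases hb : b = b'
    · subst hb
      rw [htr3, if_pos rfl]
      by_cases hn : n = n'
      · rw [if_pos hn, if_pos hn]
        push_cast
        field_simp
      · rw [if_neg hn, if_neg hn, hc_def]
        push_cast
        field_simp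
        ring
    · rw [htr2 b b' hb, if_neg hb]
      push_cast
      field_simp
      simp
  have hone : ∑ _n : Fin d, ((d : ℂ))⁻¹ • (1 : Matrix (Fin d) (Fin d) ℂ)
      = (1 : Matrix (Fin d) (Fin d) ℂ) := by
    rw [Finset.sum_const, Finset.card_univ, Fintype.card_fin,
      ← Nat.cast_smul_eq_nsmul ℂ, smul_smul, mul_inv_cancel₀ hdc0, one_smul]
  have hsumv : ∀ b, ∑ n, v b n = 0 := by
    intro b
    rw [hv_def]
    rw [Finset.sum_sub_distrib, hsum, hone, sub_self]
  -- frame operator acts as c on each v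
  have hA : ∀ b' n', ∑ b, ∑ n, ((v b n * v b' n').trace) • v b n
      = ((c : ℂ)) • v b' n' := by
    intro b' n'
    rw [Finset.sum_eq_single_of_mem b' (Finset.mem_univ b')]
    swap
    · intro b _ hb
      apply Finset.sum_eq_zero
      intro n _
      rw [htrv, if_neg hb, zero_smul]
    have hsplit : ∀ n : Fin d,
        ((v b' n * v b' n').trace) • v b' n
        = (if n = n' then ((c : ℂ)) • v b' n else 0)
            + ((-c/(d:ℝ) : ℝ) : ℂ) • v b' n := by
      intro n
      rw [htrv, if_pos rfl]
      by_cases hn : n = n'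
      · rw [if_pos hn, if_pos hn, ← add_smul]
        congr 1
        rw [hc_def]
        push_cast
        field_simp
        ring
      · rw [if_neg hn, if_neg hn, zero_add]
    calc ∑ n, ((v b' n * v b' n').trace) • v b' n
        = ∑ n, ((if n = n' then ((c : ℂ)) • v b' n else 0)
            + ((-c/(d:ℝ) : ℝ) : ℂ) • v b' n) := Finset.sum_congr rfl fun n _ => hsplit n
      _ = (∑ n, if n = n' then ((c : ℂ)) • v b' n else 0)
            + ((-c/(d:ℝ) : ℝ) : ℂ) • ∑ n, v b' n := by
          rw [Finset.sum_add_distrib, Finset.smul_sum]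
      _ = ((c : ℂ)) • v b' n' := by
          rw [Finset.sum_ite_eq' Finset.univ n', if_pos (Finset.mem_univ n'), hsumv,
            smul_zero, add_zero]
  -- the basis
  set e : Fin (d-1) → Fin d := Fin.castLE (Nat.sub_le d 1) with he_def
  have he : Function.Injective e := Fin.castLE_injective _
  set w : (Fin 1 ⊕ (Fin (d+1) × Fin (d-1))) → Matrix (Fin d) (Fin d) ℂ :=
    fun i => Sum.elim (fun _ => (1 : Matrix (Fin d) (Fin d) ℂ))
      (fun q => v q.1 (e q.2)) i with hw_def
  have hdm1 : ((d - 1 : ℕ) : ℂ) = (d : ℂ) - 1 := by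
    push_cast [Nat.cast_sub (by omega : 1 ≤ d)]; ring
  have li : LinearIndependent ℂ w := by
    rw [Fintype.linearIndependent_iff]
    intro g hg
    have pair : ∀ j, ∑ i, g i * (w i * w j).trace = 0 := by
      intro j
      have h2 := congrArg (fun M => (M * w j).trace) hg
      simpa [Finset.sum_mul, add_mul, smul_mul_assoc, Matrix.trace_add,
        Matrix.trace_sum, Matrix.trace_smul, smul_eq_mul] using h2
    have hg0 : g (Sum.inl 0) = 0 := by
      have h := pair (Sum.inl 0)
      simp only [hw_def, Fintype.sum_sum_type, Sum.elim_inl, Sum.elim_inr,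
        Matrix.mul_one, Matrix.trace_one, Fintype.card_fin, htrv0, mul_zero,
        Finset.sum_const_zero, add_zero, Fin.sum_univ_one] at h
      exact (mul_eq_zero.1 h).resolve_right hdc0
    have hrow : ∀ (b' : Fin (d+1)) (k' : Fin (d-1)),
        ∑ k, g (Sum.inr (b', k)) * (if k = k' then ((κ - 1/(d:ℝ) : ℝ) : ℂ)
          else ((-c/(d:ℝ) : ℝ) : ℂ)) = 0 := by
      intro b' k'
      have h := pair (Sum.inr (b', k'))
      simp only [hw_def, Fintype.sum_sum_type, Sum.elim_inl, Sum.elim_inr,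
        Fin.sum_univ_one, Matrix.one_mul, htrv0, mul_zero, Fintype.sum_prod_type] at h
      rw [Finset.sum_eq_single_of_mem b' (Finset.mem_univ b')] at h
      · rw [zero_add] at h
        rw [← h]
        apply Finset.sum_congr rfl
        intro k _
        rw [htrv, if_pos rfl]
        congr 1
        by_cases hk : k = k'
        · rw [if_pos hk, if_pos (by rw [hk])]
        · rw [if_neg hk, if_neg (fun hek => hk (he hek))]
      · intro b _ hb
        apply Finset.sum_eq_zero
        intro k _
        rw [htrv, if_neg hb, mul_zero]
    have hgk : ∀ (b' : Fin (d+1)) (k' : Fin (d-1)),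
        g (Sum.inr (b', k')) = (∑ k, g (Sum.inr (b', k))) / (d : ℂ) := by
      intro b' k'
      have h := hrow b' k'
      have hcsplit : ((κ - 1/(d:ℝ) : ℝ) : ℂ) = ((-c/(d:ℝ) : ℝ) : ℂ) + ((c : ℂ)) := by
        rw [hc_def]
        push_cast
        field_simp
        ring
      have hterm : ∀ k : Fin (d-1),
          g (Sum.inr (b', k)) * (if k = k' then ((κ - 1/(d:ℝ) : ℝ) : ℂ)
            else ((-c/(d:ℝ) : ℝ) : ℂ))
          = g (Sum.inr (b', k)) * ((-c/(d:ℝ) : ℝ) : ℂ)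
            + (if k = k' then g (Sum.inr (b', k)) * ((c : ℂ)) else 0) := by
        intro k
        by_cases hk : k = k'
        · rw [if_pos hk, if_pos hk, hcsplit]
          ring
        · rw [if_neg hk, if_neg hk]
          ring
      have h2 := h
      rw [Finset.sum_congr rfl (fun k _ => hterm k), Finset.sum_add_distrib,
        ← Finset.sum_mul, Finset.sum_ite_eq' Finset.univ k',
        if_pos (Finset.mem_univ k')] at h2
      have h3 : ((c : ℂ)) * (g (Sum.inr (b', k')) - (∑ k, g (Sum.inr (b', k))) / (d : ℂ)) = 0 := by
        push_cast at h2 ⊢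
        field_simp at h2 ⊢
        linear_combination h2
      rcases mul_eq_zero.1 h3 with h4 | h4
      · exact absurd h4 hcc0
      · linear_combination h4
    have hS : ∀ b' : Fin (d+1), (∑ k, g (Sum.inr (b', k))) = 0 := by
      intro b'
      set S := ∑ k, g (Sum.inr (b', k)) with hS_def
      have h5 : S = ((d - 1 : ℕ) : ℂ) * (S / (d : ℂ)) := by
        conv_lhs => rw [hS_def]
        rw [Finset.sum_congr rfl fun k _ => hgk b' k]
        rw [Finset.sum_const, Finset.card_univ, Fintype.card_fin, nsmul_eq_mul]
      rw [hdm1] at h5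
      have h6 : S * ((d : ℂ))⁻¹ = 0 := by
        calc S * ((d : ℂ))⁻¹ = S - ((d : ℂ) - 1) * (S / (d : ℂ)) := by
              field_simp
              ring
          _ = 0 := sub_eq_zero.2 h5
      rcases mul_eq_zero.1 h6 with h7 | h7
      · exact h7
      · exact absurd h7 (inv_ne_zero hdc0)
    rintro (x | ⟨b', k'⟩)
    · have : x = 0 := Subsingleton.elim x 0
      rw [this]; exact hg0
    · rw [hgk b' k', hS b', zero_div]
  have hcard : Fintype.card (Fin 1 ⊕ (Fin (d+1) × Fin (d-1)))
      = Module.finrank ℂ (Matrix (Fin d) (Fin d) ℂ) := by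
    simp [Module.finrank_matrix]
    obtain ⟨k, rfl⟩ : ∃ k, d = k + 2 := ⟨d - 2, by omega⟩
    simp [Nat.add_sub_cancel]
    ring
  set B := basisOfLinearIndependentOfCardEqFinrank li hcard with hB_def
  have hBcoe : ⇑B = w := coe_basisOfLinearIndependentOfCardEqFinrank li hcard
  set ρ₀ : Matrix (Fin d) (Fin d) ℂ := ρ - ((d : ℂ))⁻¹ • 1 with hρ₀_def
  have hρ₀tr : ρ₀.trace = 0 := by
    simp [hρ₀_def, Matrix.trace_sub, Matrix.trace_smul, Matrix.trace_one, hρtr]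
    field_simp
    simp
  set r : (Fin 1 ⊕ (Fin (d+1) × Fin (d-1))) → ℂ := fun i => B.repr ρ₀ i with hr_def
  have hrepr : ∑ i, r i • w i = ρ₀ := by
    rw [hr_def, ← hBcoe]; exact B.sum_repr ρ₀
  -- frame operator applied to ρ₀
  have hFi : ∀ i, ∑ b, ∑ n, ((v b n * w i).trace) • v b n
      = Sum.elim (fun _ => (0 : Matrix (Fin d) (Fin d) ℂ))
          (fun q => ((c : ℂ)) • v q.1 (e q.2)) i := by
    rintro (x | ⟨b', k'⟩)
    · simp [hw_def, htrv0, Matrix.mul_one]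
    · simpa [hw_def] using hA b' (e k')
  have hAρ : ∑ b, ∑ n, ((v b n * ρ₀).trace) • v b n
      = ((c : ℂ)) • ρ₀ - ((c : ℂ) * r (Sum.inl 0)) • (1 : Matrix (Fin d) (Fin d) ℂ) := by
    have step1 : ∑ b, ∑ n, ((v b n * ρ₀).trace) • v b n
        = ∑ b, ∑ n, ∑ i, (r i * (v b n * w i).trace) • v b n := by
      apply Finset.sum_congr rfl; intro b _
      apply Finset.sum_congr rfl; intro n _
      rw [← Finset.sum_smul]
      congr 1
      conv_lhs => rw [← hrepr]
      rw [Finset.mul_sum, Matrix.trace_sum]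
      apply Finset.sum_congr rfl; intro i _
      rw [Matrix.mul_smul, Matrix.trace_smul, smul_eq_mul]
    have step2 : ∑ b, ∑ n, ∑ i, (r i * (v b n * w i).trace) • v b n
        = ∑ i, r i • (∑ b, ∑ n, ((v b n * w i).trace) • v b n) := by
      calc ∑ b, ∑ n, ∑ i, (r i * (v b n * w i).trace) • v b n
          = ∑ b, ∑ i, ∑ n, (r i * (v b n * w i).trace) • v b n :=
            Finset.sum_congr rfl fun b _ => Finset.sum_comm
        _ = ∑ i, ∑ b, ∑ n, (r i * (v b n * w i).trace) • v b n :=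
            Finset.sum_comm
        _ = ∑ i, r i • (∑ b, ∑ n, ((v b n * w i).trace) • v b n) := by
            apply Finset.sum_congr rfl; intro i _
            rw [Finset.smul_sum]
            apply Finset.sum_congr rfl; intro b _
            rw [Finset.smul_sum]
            apply Finset.sum_congr rfl; intro n _
            rw [mul_smul]
    have hsplit : ∑ q : Fin (d+1) × Fin (d-1), r (Sum.inr q) • w (Sum.inr q)
        = ρ₀ - r (Sum.inl 0) • w (Sum.inl 0) := by
      conv_rhs => rw [← hrepr]
      rw [Fintype.sum_sum_type, Fin.sum_univ_one]
      abel
    rw [step1, step2]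
    calc ∑ i, r i • (∑ b, ∑ n, ((v b n * w i).trace) • v b n)
        = ∑ i, r i • (Sum.elim (fun _ => (0 : Matrix (Fin d) (Fin d) ℂ))
            (fun q => ((c : ℂ)) • v q.1 (e q.2)) i) :=
          Finset.sum_congr rfl fun i _ => by rw [hFi]
      _ = ∑ q : Fin (d+1) × Fin (d-1), r (Sum.inr q) • (((c : ℂ)) • v q.1 (e q.2)) := by
          rw [Fintype.sum_sum_type, Fin.sum_univ_one]
          simp
      _ = ((c : ℂ)) • ∑ q : Fin (d+1) × Fin (d-1), r (Sum.inr q) • w (Sum.inr q) := by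
          rw [Finset.smul_sum]
          apply Finset.sum_congr rfl; intro q _
          rw [smul_comm]
          rfl
      _ = ((c : ℂ)) • ρ₀ - ((c : ℂ) * r (Sum.inl 0)) • (1 : Matrix (Fin d) (Fin d) ℂ) := by
          rw [hsplit, smul_sub, smul_smul]
          rfl
  have key : ∑ b, ∑ n, (v b n * ρ₀).trace * (v b n * ρ₀).trace
      = ((c : ℂ)) * (ρ₀ * ρ₀).trace := by
    have h1 : ∑ b, ∑ n, (v b n * ρ₀).trace * (v b n * ρ₀).trace
        = ((∑ b, ∑ n, ((v b n * ρ₀).trace) • v b n) * ρ₀).trace := by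
      rw [Finset.sum_mul, Matrix.trace_sum]
      apply Finset.sum_congr rfl; intro b _
      rw [Finset.sum_mul, Matrix.trace_sum]
      apply Finset.sum_congr rfl; intro n _
      rw [Matrix.smul_mul, Matrix.trace_smul, smul_eq_mul]
    rw [h1, hAρ, Matrix.sub_mul, Matrix.trace_sub, Matrix.smul_mul, Matrix.smul_mul,
      Matrix.trace_smul, Matrix.trace_smul, Matrix.one_mul, hρ₀tr, smul_eq_mul,
      smul_eq_mul, mul_zero, sub_zero]
  -- translate to real quantities
  have hvρ : ∀ b n, (v b n * ρ₀).trace = ((p b n - 1/(d:ℝ) : ℝ) : ℂ) := by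
    intro b n
    simp only [hv_def, hρ₀_def, Matrix.sub_mul, Matrix.mul_sub, Matrix.trace_sub,
      Matrix.smul_mul, Matrix.mul_smul, Matrix.trace_smul, Matrix.trace_one,
      Matrix.one_mul, Matrix.mul_one, htr1, hρtr, smul_eq_mul, mul_one, smul_smul]
    rw [← hp]
    push_cast
    field_simp
    simp
  have hTreal : (ρ * ρ).trace = (((ρ * ρ).trace.re : ℝ) : ℂ) := by
    have h1 : star ((ρ * ρ).trace) = (ρ * ρ).trace := by
      rw [← Matrix.trace_conjTranspose, Matrix.conjTranspose_mul, hρ.1]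
    exact (Complex.conj_eq_iff_re.1 h1).symm
  have hρ₀sq : (ρ₀ * ρ₀).trace = (((ρ * ρ).trace.re - 1/(d:ℝ) : ℝ) : ℂ) := by
    simp only [hρ₀_def, Matrix.sub_mul, Matrix.mul_sub, Matrix.trace_sub,
      Matrix.smul_mul, Matrix.mul_smul, Matrix.trace_smul, Matrix.trace_one,
      Matrix.one_mul, Matrix.mul_one, hρtr, smul_eq_mul, mul_one, smul_smul]
    rw [hTreal]
    push_cast
    field_simp
    simp only [Fintype.card_fin, Complex.ofReal_re, sub_self, sub_zero]; ring
  have hreal : ∑ b, ∑ n, (p b n - 1/(d:ℝ))^2 = c * ((ρ * ρ).trace.re - 1/(d:ℝ)) := by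
    have hkey := key
    rw [hρ₀sq] at hkey
    simp only [hvρ] at hkey
    have hC : ((∑ b, ∑ n, (p b n - 1/(d:ℝ))^2 : ℝ) : ℂ)
        = ((c * ((ρ * ρ).trace.re - 1/(d:ℝ)) : ℝ) : ℂ) := by
      push_cast
      simp only [pow_two]
      push_cast at hkey
      linear_combination hkey
    exact_mod_cast hC
  have hpsum : ∀ b, ∑ n, p b n = 1 := by
    intro b
    have hC : ((∑ n, p b n : ℝ) : ℂ) = ((1 : ℝ) : ℂ) := by
      push_cast
      simp only [hp]
      rw [← Matrix.trace_sum, ← Finset.sum_mul, hsum, Matrix.one_mul, hρtr]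
    exact_mod_cast hC
  -- final arithmetic
  have hb : ∀ b, ∑ n, p b n ^ 2 = (∑ n, (p b n - 1/(d:ℝ))^2) + 1/(d:ℝ) := by
    intro b
    have h1 : ∑ n, (p b n)^2
        = ∑ n, ((p b n - 1/(d:ℝ))^2 + (2/(d:ℝ)) * p b n - 1/(d:ℝ)^2) :=
      Finset.sum_congr rfl fun n _ => by ring
    rw [h1, Finset.sum_sub_distrib, Finset.sum_add_distrib, ← Finset.mul_sum, hpsum b,
      Finset.sum_const, Finset.card_univ, Fintype.card_fin, nsmul_eq_mul]
    have h2 : (2/(d:ℝ)) * 1 - (d:ℝ) * (1/(d:ℝ)^2) = 1/(d:ℝ) := by field_simp; ring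
    linarith [h2]
  calc ∑ b, ∑ n, (p b n)^2
      = ∑ b : Fin (d+1), ((∑ n, (p b n - 1/(d:ℝ))^2) + 1/(d:ℝ)) :=
        Finset.sum_congr rfl fun b _ => hb b
    _ = (∑ b, ∑ n, (p b n - 1/(d:ℝ))^2) + ((d:ℝ)+1) * (1/(d:ℝ)) := by
        rw [Finset.sum_add_distrib, Finset.sum_const, Finset.card_univ, Fintype.card_fin,
          nsmul_eq_mul]
        push_cast
        ring
    _ = (((d : ℝ) * κ - 1) * ((d : ℝ) * ((ρ * ρ).trace.re) - 1) + (d : ℝ) ^ 2 - 1) /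
        ((d : ℝ) * ((d : ℝ) - 1)) := by
        rw [hreal, hc_def]
        field_simp
        ring
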